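/- Let F be an infinite field with char F ≠ 2 and let n ≥ 2. Then for all λ, μ ∈ F, the set Ω_n(λ, μ) = {A ∈ M_n(F) : per A = λ and det A = μ} has the same cardinality as F. -/

import Mathlib

open Equiv Finset Matrix

section aux

variable {R : Type*} [CommRing R]

theorem permanent_submatrix_equiv {m n : Type*} [DecidableEq m] [Fintype m]
    [DecidableEq n] [Fintype n] (e : n ≃ m) (M : Matrix m m R) :
    (M.submatrix e e).permanent = M.permanent := by
  unfold Matrix.permanent
  rw [← Equiv.sum_comp (Equiv.permCongr e.symm)]
  refine Finset.sum_congr rfl fun σ _ => ?_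
  rw [← Equiv.prod_comp e.symm]
  simp [Equiv.permCongr_apply, Matrix.submatrix_apply]

theorem permanent_fromBlocks_zero {m n : Type*} [DecidableEq m] [Fintype m]
    [DecidableEq n] [Fintype n] (A : Matrix m m R) (D : Matrix n n R) :
    (Matrix.fromBlocks A 0 0 D).permanent = A.permanent * D.permanent := by
  classical
  simp_rw [Matrix.permanent]
  convert Eq.symm <|
    Finset.sum_subset (M := R)
      (Finset.subset_univ ((Equiv.Perm.sumCongrHom m n).range : Set (Perm (m ⊕ n))).toFinset) ?_
  · simp_rw [Finset.sum_mul_sum, ← Finset.sum_product', Finset.univ_product_univ]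
    refine Finset.sum_nbij (fun σ ↦ σ.fst.sumCongr σ.snd) ?_ ?_ ?_ ?_
    · intro σ₁₂ _
      erw [Set.mem_toFinset, MonoidHom.mem_range]
      exact ⟨σ₁₂, rfl⟩
    · intro σ₁ _ σ₂ _
      dsimp only
      intro h
      have h2 : ∀ x, Perm.sumCongr σ₁.fst σ₁.snd x = Perm.sumCongr σ₂.fst σ₂.snd x :=
        DFunLike.congr_fun h
      simp only [Sum.map_inr, Sum.map_inl, Perm.sumCongr_apply, Sum.forall, Sum.inl.injEq,
        Sum.inr.injEq] at h2
      ext x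
      · exact h2.left x
      · exact h2.right x
    · intro σ hσ
      erw [Set.mem_toFinset, MonoidHom.mem_range] at hσ
      obtain ⟨σ₁₂, hσ₁₂⟩ := hσ
      use σ₁₂
      rw [← hσ₁₂]
      simp
    · simp only [forall_prop_of_true, Prod.forall, Finset.mem_univ]
      intro σ₁ σ₂
      rw [Fintype.prod_sum_type]
      simp_rw [Equiv.sumCongr_apply, Sum.map_inr, Sum.map_inl, Matrix.fromBlocks_apply₁₁,
        Matrix.fromBlocks_apply₂₂]
  · rintro σ - hσn
    have h1 : ¬∀ x, ∃ y, Sum.inl y = σ (Sum.inl x) := by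
      rw [Set.mem_toFinset] at hσn
      simpa only [Set.MapsTo, Set.mem_range, forall_exists_index, forall_apply_eq_imp_iff] using
        mt Equiv.Perm.mem_sumCongrHom_range_of_perm_mapsTo_inl hσn
    obtain ⟨a, ha⟩ := not_forall.mp h1
    cases' hx : σ (Sum.inl a) with a2 b
    · exact absurd hx.symm ((not_exists.mp ha) a2)
    · rw [Finset.prod_eq_zero (Finset.mem_univ (Sum.inl a))]
      rw [hx, Matrix.fromBlocks_apply₂₁, Matrix.zero_apply]

theorem permanent_fin_two (A : Matrix (Fin 2) (Fin 2) R) :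
    A.permanent = A 0 0 * A 1 1 + A 0 1 * A 1 0 := by
  rw [Matrix.permanent]
  have h : (Finset.univ : Finset (Perm (Fin 2))) = {1, Equiv.swap 0 1} := by decide
  rw [h, Finset.sum_pair (by decide)]
  simp [Fin.prod_univ_two]
  ring

end aux

/-- Over an infinite field `F` with `char F ≠ 2` and for `n ≥ 2`, the set
`Ωₙ(λ, μ) = {A ∈ Mₙ(F) : per A = λ, det A = μ}` has the same cardinality as `F`,
for every `λ, μ ∈ F`. -/
theorem card_Omega_eq_card_field (F : Type*) [Field F] [Infinite F]
    (hch : ringChar F ≠ 2) (n : ℕ) (hn : 2 ≤ n) (lam mu : F) :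
    Cardinal.mk {A : Matrix (Fin n) (Fin n) F // A.permanent = lam ∧ A.det = mu} =
      Cardinal.mk F := by
  have h2 : (2 : F) ≠ 0 := by
    simpa using (Ring.two_ne_zero (by simpa [ringChar.spec] using hch) : (2 : F) ≠ 0)
  obtain ⟨α, β, hsum, hdiff⟩ : ∃ a b : F, a + b = lam ∧ a - b = mu :=
    ⟨(lam + mu) / 2, (lam - mu) / 2, by field_simp; ring, by field_simp; ring⟩
  have hne : n = 2 + (n - 2) := by omega
  let e : Fin n ≃ Fin 2 ⊕ Fin (n - 2) := (finCongr hne).trans finSumFinEquiv.symm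
  let B : F → Matrix (Fin 2) (Fin 2) F := fun t => !![t, β * t⁻¹; t, α * t⁻¹]
  let M : F → Matrix (Fin n) (Fin n) F := fun t =>
    (Matrix.fromBlocks (B t) 0 0 (1 : Matrix (Fin (n - 2)) (Fin (n - 2)) F)).submatrix e e
  have hper : ∀ t : F, t ≠ 0 → (M t).permanent = lam := by
    intro t ht
    rw [show M t = _ from rfl, permanent_submatrix_equiv, permanent_fromBlocks_zero,
      Matrix.permanent_one, mul_one, permanent_fin_two]
    simp only [B, Matrix.of_apply, Matrix.cons_val', Matrix.cons_val_zero, Matrix.cons_val_one, Matrix.head_cons,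
      Matrix.head_fin_const, Matrix.empty_val', Matrix.cons_val_fin_one]
    field_simp
    linear_combination hsum
  have hdet : ∀ t : F, t ≠ 0 → (M t).det = mu := by
    intro t ht
    rw [show M t = _ from rfl, Matrix.det_submatrix_equiv_self, Matrix.det_fromBlocks_zero₂₁,
      Matrix.det_one, mul_one, Matrix.det_fin_two]
    simp only [B, Matrix.of_apply, Matrix.cons_val', Matrix.cons_val_zero, Matrix.cons_val_one, Matrix.head_cons,
      Matrix.head_fin_const, Matrix.empty_val', Matrix.cons_val_fin_one]
    field_simp
    linear_combination hdiff
  apply le_antisymm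
  · calc Cardinal.mk {A : Matrix (Fin n) (Fin n) F // A.permanent = lam ∧ A.det = mu}
        ≤ Cardinal.mk (Matrix (Fin n) (Fin n) F) := Cardinal.mk_subtype_le _
      _ = Cardinal.mk F := by
          rw [show Matrix (Fin n) (Fin n) F = (Fin n → Fin n → F) from rfl]
          rw [Cardinal.mk_arrow, Cardinal.mk_arrow]
          simp only [Cardinal.lift_id, Cardinal.lift_uzero, Cardinal.mk_fin,
            Cardinal.lift_natCast]
          rw [Cardinal.power_natCast, Cardinal.power_natCast,
            Cardinal.power_nat_eq (Cardinal.infinite_iff.mp inferInstance) (by omega : 1 ≤ n),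
            Cardinal.power_nat_eq (Cardinal.infinite_iff.mp inferInstance) (by omega : 1 ≤ n)]
  · have hcompl : Cardinal.mk ({0}ᶜ : Set F) = Cardinal.mk F :=
      Cardinal.mk_compl_of_infinite _ (by
        rw [Cardinal.mk_singleton]
        exact lt_of_lt_of_le Cardinal.one_lt_aleph0 (Cardinal.infinite_iff.mp inferInstance))
    rw [← hcompl]
    refine Cardinal.mk_le_of_injective (f := fun t : ({0}ᶜ : Set F) =>
      (⟨M t.1, hper t.1 t.2, hdet t.1 t.2⟩ :
        {A : Matrix (Fin n) (Fin n) F // A.permanent = lam ∧ A.det = mu})) ?_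
    intro s t hst
    have hm : M s.1 = M t.1 := congrArg Subtype.val hst
    have h00 := congrFun (congrFun hm (e.symm (Sum.inl 0))) (e.symm (Sum.inl 0))
    apply Subtype.ext
    simpa [M, B, Matrix.submatrix_apply] using h00
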